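/- Under Assumptions IV and strong monotonicity, τ_LATT = E[e(X)·π(X)·τ(X)] / E[e(X)·π(X)] and τ_LATU = E[(1−e(X))·π(X)·τ(X)] / E[(1−e(X))·π(X)], where e(X) = Pr[Z=1|X]. -/

import Mathlib

open Finset

section Defs

variable {Ω 𝓧 : Type*} [Fintype Ω]

/-- Expectation of `f` under weights `p` on a finite outcome space. -/
noncomputable def pexp (p : Ω → ℝ) (f : Ω → ℝ) : ℝ := ∑ ω, p ω * f ω

open Classical in
/-- Probability of the event `A` under weights `p`. -/
noncomputable def pprob (p : Ω → ℝ) (A : Ω → Prop) : ℝ := ∑ ω, if A ω then p ω else 0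

open Classical in
/-- Conditional expectation of `f` given the event `A`. -/
noncomputable def eexp (p : Ω → ℝ) (A : Ω → Prop) (f : Ω → ℝ) : ℝ :=
  (∑ ω, if A ω then p ω * f ω else 0) / pprob p A

/-- Conditional probability of `A` given `B`. -/
noncomputable def cprob (p : Ω → ℝ) (A B : Ω → Prop) : ℝ :=
  pprob p (fun ω => A ω ∧ B ω) / pprob p B

/-- `p` is a probability vector. -/
def IsProb (p : Ω → ℝ) : Prop := (∀ ω, 0 ≤ p ω) ∧ ∑ ω, p ω = 1

/-- Conditional expectation of `f` given `X = x`. -/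
noncomputable def condMean (p : Ω → ℝ) (X : Ω → 𝓧) (f : Ω → ℝ) (x : 𝓧) : ℝ :=
  eexp p (fun ω => X ω = x) f

/-- Conditional expectation of `f` given `X = x` and `Z = z`. -/
noncomputable def condMeanOn (p : Ω → ℝ) (X : Ω → 𝓧) (Z : Ω → ℝ) (f : Ω → ℝ) (x : 𝓧) (z : ℝ) : ℝ :=
  eexp p (fun ω => X ω = x ∧ Z ω = z) f

/-- Conditional cslope coefficient `E[f | Z=1, X=x] - E[f | Z=0, X=x]`. -/
noncomputable def cslope (p : Ω → ℝ) (X : Ω → 𝓧) (Z : Ω → ℝ) (f : Ω → ℝ) (x : 𝓧) : ℝ :=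
  condMeanOn p X Z f x 1 - condMeanOn p X Z f x 0

/-- Conditional variance of `f` given the event `A`. -/
noncomputable def evVar (p : Ω → ℝ) (A : Ω → Prop) (f : Ω → ℝ) : ℝ :=
  eexp p A (fun ω => (f ω - eexp p A f) ^ 2)

/-- Conditional variance of `f` given `X = x`. -/
noncomputable def condVar (p : Ω → ℝ) (X : Ω → 𝓧) (f : Ω → ℝ) (x : 𝓧) : ℝ :=
  evVar p (fun ω => X ω = x) f

end Defs

open Classical Finset in
private lemma pprob_congr' {Ω : Type*} [Fintype Ω] (p : Ω → ℝ) {A B : Ω → Prop}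
    (h : ∀ ω, p ω ≠ 0 → (A ω ↔ B ω)) : pprob p A = pprob p B := by
  unfold pprob
  refine Finset.sum_congr rfl fun ω _ => ?_
  by_cases hω : p ω = 0
  · split_ifs <;> simp [hω]
  · have := h ω hω
    split_ifs <;> tauto

open Classical Finset in
private lemma fiber_zero {Ω 𝓧 : Type*} [Fintype Ω] {p : Ω → ℝ} (hp0 : ∀ ω, 0 ≤ p ω)
    {X : Ω → 𝓧} {x : 𝓧} (h : pprob p (fun ω => X ω = x) = 0) :
    ∀ ω, X ω = x → p ω = 0 := by
  intro ω hω
  by_contra hne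
  have hpos : 0 < p ω := lt_of_le_of_ne (hp0 ω) (Ne.symm hne)
  have hge : p ω ≤ pprob p (fun ω => X ω = x) := by
    unfold pprob
    refine le_trans ?_ (Finset.single_le_sum (fun i _ => ?_) (Finset.mem_univ ω))
    · rw [if_pos hω]
    · split_ifs
      · exact hp0 i
      · exact le_rfl
  linarith

open Classical Finset in
private lemma pexp_group {Ω 𝓧 : Type*} [Fintype Ω] (p : Ω → ℝ) (X : Ω → 𝓧) (c : 𝓧 → ℝ) :
    pexp p (fun ω => c (X ω))
      = ∑ x ∈ Finset.univ.image X, pprob p (fun ω => X ω = x) * c x := by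
  unfold pexp pprob
  rw [← Finset.sum_fiberwise_of_maps_to (fun ω _ => Finset.mem_image_of_mem X (Finset.mem_univ ω))
    (fun ω => p ω * c (X ω))]
  refine Finset.sum_congr rfl fun x hx => ?_
  rw [← Finset.sum_filter, Finset.sum_mul]
  refine Finset.sum_congr rfl fun ω hω => ?_
  rw [(Finset.mem_filter.mp hω).2]

open Classical Finset in
private lemma sum_group {Ω 𝓧 : Type*} [Fintype Ω] (X : Ω → 𝓧) (F : Ω → ℝ) (B : Ω → Prop)
    [∀ ω, Decidable (B ω)] :
    (∑ ω, if B ω then F ω else 0)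
      = ∑ x ∈ Finset.univ.image X, ∑ ω, if X ω = x ∧ B ω then F ω else 0 := by
  rw [← Finset.sum_fiberwise_of_maps_to (fun ω _ => Finset.mem_image_of_mem X (Finset.mem_univ ω))
    (fun ω => if B ω then F ω else 0)]
  refine Finset.sum_congr rfl fun x hx => ?_
  rw [Finset.sum_filter]
  refine Finset.sum_congr rfl fun ω _ => ?_
  split_ifs <;> first | rfl | tauto

open Classical Finset in
private lemma decomp_lemma {Ω α : Type*} [Fintype Ω] [DecidableEq α] (W : Ω → α)
    (C : Ω → Prop) [∀ ω, Decidable (C ω)] (h : Ω → ℝ) :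
    (∑ ω, if C ω then h ω else 0)
      = ∑ t ∈ Finset.univ.image W, ∑ ω, if C ω ∧ W ω = t then h ω else 0 := by
  rw [Finset.sum_comm]
  refine Finset.sum_congr rfl fun ω _ => ?_
  symm
  calc ∑ t ∈ Finset.univ.image W, (if C ω ∧ W ω = t then h ω else 0)
      = ∑ t ∈ Finset.univ.image W, (if W ω = t then (if C ω then h ω else 0) else 0) := by
        refine Finset.sum_congr rfl fun t _ => ?_
        split_ifs <;> first | rfl | tauto
    _ = if W ω ∈ Finset.univ.image W then (if C ω then h ω else 0) else 0 :=
        Finset.sum_ite_eq _ (W ω) _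
    _ = if C ω then h ω else 0 := if_pos (Finset.mem_image_of_mem W (Finset.mem_univ ω))

open Classical Finset in
private lemma Z_split {Ω 𝓧 : Type*} [Fintype Ω] (p : Ω → ℝ) (X : Ω → 𝓧) (Z : Ω → ℝ)
    (hZ : ∀ ω, Z ω = 0 ∨ Z ω = 1) (x : 𝓧) :
    pprob p (fun ω => X ω = x)
      = pprob p (fun ω => X ω = x ∧ Z ω = 0) + pprob p (fun ω => X ω = x ∧ Z ω = 1) := by
  unfold pprob
  rw [← Finset.sum_add_distrib]
  refine Finset.sum_congr rfl fun ω _ => ?_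
  rcases hZ ω with h | h <;> split_ifs <;> simp_all

open Classical Finset in
private lemma indep_gen {Ω 𝓧 : Type*} [Fintype Ω] (p : Ω → ℝ)
    (X : Ω → 𝓧) (Z D0 D1 Y0 Y1 : Ω → ℝ)
    (hindep : ∀ (x : 𝓧) (y0 y1 d0 d1 z : ℝ),
      pprob p (fun ω => X ω = x ∧ Y0 ω = y0 ∧ Y1 ω = y1 ∧ D0 ω = d0 ∧ D1 ω = d1 ∧ Z ω = z) *
          pprob p (fun ω => X ω = x)
        = pprob p (fun ω => X ω = x ∧ Y0 ω = y0 ∧ Y1 ω = y1 ∧ D0 ω = d0 ∧ D1 ω = d1) *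
            pprob p (fun ω => X ω = x ∧ Z ω = z))
    (x : 𝓧) (z : ℝ) (Q : ℝ → ℝ → ℝ → ℝ → Prop) [∀ a b c d, Decidable (Q a b c d)]
    (g : ℝ → ℝ → ℝ → ℝ → ℝ) :
    (∑ ω, if X ω = x ∧ Q (Y0 ω) (Y1 ω) (D0 ω) (D1 ω) ∧ Z ω = z then
        p ω * g (Y0 ω) (Y1 ω) (D0 ω) (D1 ω) else 0) * pprob p (fun ω => X ω = x)
      = (∑ ω, if X ω = x ∧ Q (Y0 ω) (Y1 ω) (D0 ω) (D1 ω) then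
          p ω * g (Y0 ω) (Y1 ω) (D0 ω) (D1 ω) else 0) * pprob p (fun ω => X ω = x ∧ Z ω = z) := by
  have keyZ : ∀ (t : ℝ × ℝ × ℝ × ℝ),
      (∑ ω, if (X ω = x ∧ Q (Y0 ω) (Y1 ω) (D0 ω) (D1 ω) ∧ Z ω = z) ∧
          (Y0 ω, Y1 ω, D0 ω, D1 ω) = t then
          p ω * g (Y0 ω) (Y1 ω) (D0 ω) (D1 ω) else 0)
        = (if Q t.1 t.2.1 t.2.2.1 t.2.2.2 then g t.1 t.2.1 t.2.2.1 t.2.2.2 else 0) *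
            pprob p (fun ω => X ω = x ∧ Y0 ω = t.1 ∧ Y1 ω = t.2.1 ∧ D0 ω = t.2.2.1 ∧
              D1 ω = t.2.2.2 ∧ Z ω = z) := by
    intro t
    simp only [pprob, Finset.mul_sum]
    refine Finset.sum_congr rfl fun ω _ => ?_
    by_cases hE : Y0 ω = t.1 ∧ Y1 ω = t.2.1 ∧ D0 ω = t.2.2.1 ∧ D1 ω = t.2.2.2
    · obtain ⟨e0, e1, e2, e3⟩ := hE
      by_cases hQ : Q t.1 t.2.1 t.2.2.1 t.2.2.2
      · by_cases hX : X ω = x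
        · by_cases hR : Z ω = z
          · simp [e0, e1, e2, e3, Prod.mk.eta, hQ, hX, hR, mul_comm]
          · simp [e0, e1, e2, e3, Prod.mk.eta, hQ, hX, hR]
        · simp [e0, e1, e2, e3, Prod.mk.eta, hQ, hX]
      · simp [e0, e1, e2, e3, Prod.mk.eta, hQ]
    · have h1 : ¬ ((X ω = x ∧ Q (Y0 ω) (Y1 ω) (D0 ω) (D1 ω) ∧ Z ω = z) ∧
          (Y0 ω, Y1 ω, D0 ω, D1 ω) = t) := by
        simp only [Prod.ext_iff]; tauto
      have h2 : ¬ (X ω = x ∧ Y0 ω = t.1 ∧ Y1 ω = t.2.1 ∧ D0 ω = t.2.2.1 ∧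
          D1 ω = t.2.2.2 ∧ Z ω = z) := by tauto
      rw [if_neg h1, if_neg h2, mul_zero]
  have keyT : ∀ (t : ℝ × ℝ × ℝ × ℝ),
      (∑ ω, if (X ω = x ∧ Q (Y0 ω) (Y1 ω) (D0 ω) (D1 ω)) ∧
          (Y0 ω, Y1 ω, D0 ω, D1 ω) = t then
          p ω * g (Y0 ω) (Y1 ω) (D0 ω) (D1 ω) else 0)
        = (if Q t.1 t.2.1 t.2.2.1 t.2.2.2 then g t.1 t.2.1 t.2.2.1 t.2.2.2 else 0) *
            pprob p (fun ω => X ω = x ∧ Y0 ω = t.1 ∧ Y1 ω = t.2.1 ∧ D0 ω = t.2.2.1 ∧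
              D1 ω = t.2.2.2) := by
    intro t
    simp only [pprob, Finset.mul_sum]
    refine Finset.sum_congr rfl fun ω _ => ?_
    by_cases hE : Y0 ω = t.1 ∧ Y1 ω = t.2.1 ∧ D0 ω = t.2.2.1 ∧ D1 ω = t.2.2.2
    · obtain ⟨e0, e1, e2, e3⟩ := hE
      by_cases hQ : Q t.1 t.2.1 t.2.2.1 t.2.2.2
      · by_cases hX : X ω = x
        · simp [e0, e1, e2, e3, Prod.mk.eta, hQ, hX, mul_comm]
        · simp [e0, e1, e2, e3, Prod.mk.eta, hQ, hX]
      · simp [e0, e1, e2, e3, Prod.mk.eta, hQ]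
    · have h1 : ¬ ((X ω = x ∧ Q (Y0 ω) (Y1 ω) (D0 ω) (D1 ω)) ∧
          (Y0 ω, Y1 ω, D0 ω, D1 ω) = t) := by
        simp only [Prod.ext_iff]; tauto
      have h2 : ¬ (X ω = x ∧ Y0 ω = t.1 ∧ Y1 ω = t.2.1 ∧ D0 ω = t.2.2.1 ∧
          D1 ω = t.2.2.2) := by tauto
      rw [if_neg h1, if_neg h2, mul_zero]
  have hA : (∑ ω, if X ω = x ∧ Q (Y0 ω) (Y1 ω) (D0 ω) (D1 ω) ∧ Z ω = z then
        p ω * g (Y0 ω) (Y1 ω) (D0 ω) (D1 ω) else 0)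
      = ∑ t ∈ Finset.univ.image (fun ω => (Y0 ω, Y1 ω, D0 ω, D1 ω)),
          ∑ ω, if (X ω = x ∧ Q (Y0 ω) (Y1 ω) (D0 ω) (D1 ω) ∧ Z ω = z) ∧
            (Y0 ω, Y1 ω, D0 ω, D1 ω) = t then
            p ω * g (Y0 ω) (Y1 ω) (D0 ω) (D1 ω) else 0 :=
    decomp_lemma _ _ _
  have hB : (∑ ω, if X ω = x ∧ Q (Y0 ω) (Y1 ω) (D0 ω) (D1 ω) then
        p ω * g (Y0 ω) (Y1 ω) (D0 ω) (D1 ω) else 0)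
      = ∑ t ∈ Finset.univ.image (fun ω => (Y0 ω, Y1 ω, D0 ω, D1 ω)),
          ∑ ω, if (X ω = x ∧ Q (Y0 ω) (Y1 ω) (D0 ω) (D1 ω)) ∧
            (Y0 ω, Y1 ω, D0 ω, D1 ω) = t then
            p ω * g (Y0 ω) (Y1 ω) (D0 ω) (D1 ω) else 0 :=
    decomp_lemma _ _ _
  rw [hA, hB, Finset.sum_mul, Finset.sum_mul]
  refine Finset.sum_congr rfl fun t _ => ?_
  rw [keyZ t, keyT t, mul_assoc, mul_assoc, hindep x t.1 t.2.1 t.2.2.1 t.2.2.2 z]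

open Classical Finset in
private lemma master {Ω 𝓧 : Type*} [Fintype Ω] (p : Ω → ℝ) (hp : IsProb p)
    (X : Ω → 𝓧) (Z D0 D1 Y0 Y1 : Ω → ℝ)
    (hZ : ∀ ω, Z ω = 0 ∨ Z ω = 1)
    (hD0 : ∀ ω, D0 ω = 0 ∨ D0 ω = 1) (hD1 : ∀ ω, D1 ω = 0 ∨ D1 ω = 1)
    (hindep : ∀ (x : 𝓧) (y0 y1 d0 d1 z : ℝ),
      pprob p (fun ω => X ω = x ∧ Y0 ω = y0 ∧ Y1 ω = y1 ∧ D0 ω = d0 ∧ D1 ω = d1 ∧ Z ω = z) *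
          pprob p (fun ω => X ω = x)
        = pprob p (fun ω => X ω = x ∧ Y0 ω = y0 ∧ Y1 ω = y1 ∧ D0 ω = d0 ∧ D1 ω = d1) *
            pprob p (fun ω => X ω = x ∧ Z ω = z))
    (hπ : ∀ x : 𝓧, 0 < pprob p (fun ω => X ω = x) →
      0 < cprob p (fun ω => D1 ω ≠ D0 ω) (fun ω => X ω = x))
    (hmono : ∀ ω, 0 < p ω → D0 ω ≤ D1 ω)
    (D : Ω → ℝ) (hD : ∀ ω, D ω = if Z ω = 1 then D1 ω else D0 ω)
    (z : ℝ) (r : 𝓧 → ℝ)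
    (hr : ∀ x, 0 < pprob p (fun ω => X ω = x) →
      r x * pprob p (fun ω => X ω = x) = pprob p (fun ω => X ω = x ∧ Z ω = z)) :
    eexp p (fun ω => D1 ω ≠ D0 ω ∧ D ω = z) (fun ω => Y1 ω - Y0 ω) =
      pexp p (fun ω => r (X ω) * cprob p (fun v => D0 v < D1 v) (fun v => X v = X ω) *
          eexp p (fun v => D1 v ≠ D0 v ∧ X v = X ω) (fun v => Y1 v - Y0 v)) /
        pexp p (fun ω => r (X ω) * cprob p (fun v => D0 v < D1 v) (fun v => X v = X ω)) := by
  have hp0 : ∀ ω, 0 ≤ p ω := hp.1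
  -- on the support, D agrees with Z for compliers
  have hDZ : ∀ ω, p ω ≠ 0 → D1 ω ≠ D0 ω → D ω = Z ω := by
    intro ω hω hne
    have hpos : 0 < p ω := lt_of_le_of_ne (hp0 ω) (Ne.symm hω)
    have hm := hmono ω hpos
    rcases hD0 ω with h0 | h0 <;> rcases hD1 ω with h1 | h1 <;>
      rcases hZ ω with hz1 | hz1 <;> rw [hD ω] <;> simp_all <;> linarith
  have hsupp : ∀ ω, p ω ≠ 0 → ((D1 ω ≠ D0 ω ∧ D ω = z) ↔ (D1 ω ≠ D0 ω ∧ Z ω = z)) := by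
    intro ω hω
    constructor
    · rintro ⟨hne, h⟩; exact ⟨hne, by rw [← hDZ ω hω hne]; exact h⟩
    · rintro ⟨hne, h⟩; exact ⟨hne, by rw [hDZ ω hω hne]; exact h⟩
  have hlt : ∀ ω, p ω ≠ 0 → ((D0 ω < D1 ω) ↔ (D1 ω ≠ D0 ω)) := by
    intro ω hω
    have hpos : 0 < p ω := lt_of_le_of_ne (hp0 ω) (Ne.symm hω)
    have hm := hmono ω hpos
    exact ⟨fun h => (ne_of_lt h).symm, fun h => lt_of_le_of_ne hm (Ne.symm h)⟩
  -- the per-x core identities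
  have key : ∀ x : 𝓧,
      ((∑ ω, if X ω = x ∧ D1 ω ≠ D0 ω ∧ Z ω = z then p ω * (Y1 ω - Y0 ω) else 0)
        = pprob p (fun ω => X ω = x) *
            (r x * cprob p (fun v => D0 v < D1 v) (fun v => X v = x) *
              eexp p (fun v => D1 v ≠ D0 v ∧ X v = x) (fun v => Y1 v - Y0 v))) ∧
      ((∑ ω, if X ω = x ∧ D1 ω ≠ D0 ω ∧ Z ω = z then p ω else 0)
        = pprob p (fun ω => X ω = x) *
            (r x * cprob p (fun v => D0 v < D1 v) (fun v => X v = x))) := by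
    intro x
    by_cases hx : pprob p (fun ω => X ω = x) = 0
    · have hz0 : ∀ ω, X ω = x → p ω = 0 := fiber_zero hp0 hx
      constructor
      · rw [hx, zero_mul]
        refine Finset.sum_eq_zero fun ω _ => ?_
        split_ifs with h
        · rw [hz0 ω h.1, zero_mul]
        · rfl
      · rw [hx, zero_mul]
        refine Finset.sum_eq_zero fun ω _ => ?_
        split_ifs with h
        · exact hz0 ω h.1
        · rfl
    · have hxnn : 0 ≤ pprob p (fun ω => X ω = x) := by
        unfold pprob
        refine Finset.sum_nonneg fun ω _ => ?_
        split_ifs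
        · exact hp0 ω
        · exact le_rfl
      have hxpos : 0 < pprob p (fun ω => X ω = x) := lt_of_le_of_ne hxnn (Ne.symm hx)
      -- π as ratio, N > 0
      have hπeq : cprob p (fun v => D0 v < D1 v) (fun v => X v = x)
          = pprob p (fun ω => D1 ω ≠ D0 ω ∧ X ω = x) / pprob p (fun ω => X ω = x) := by
        unfold cprob
        congr 1
        refine pprob_congr' p fun ω hω => ?_
        constructor
        · rintro ⟨h1, h2⟩; exact ⟨(hlt ω hω).mp h1, h2⟩
        · rintro ⟨h1, h2⟩; exact ⟨(hlt ω hω).mpr h1, h2⟩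
      have hπne : cprob p (fun v => D1 v ≠ D0 v) (fun v => X v = x)
          = pprob p (fun ω => D1 ω ≠ D0 ω ∧ X ω = x) / pprob p (fun ω => X ω = x) := rfl
      have hNpos : 0 < pprob p (fun ω => D1 ω ≠ D0 ω ∧ X ω = x) := by
        have h1 := hπ x hxpos
        rw [hπne] at h1
        have h2 : 0 < pprob p (fun ω => D1 ω ≠ D0 ω ∧ X ω = x) / pprob p (fun ω => X ω = x) *
            pprob p (fun ω => X ω = x) := mul_pos h1 hxpos
        rwa [div_mul_cancel₀ _ hx] at h2
      have hNne : pprob p (fun ω => D1 ω ≠ D0 ω ∧ X ω = x) ≠ 0 := ne_of_gt hNpos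
      -- τ as ratio
      have hτeq : eexp p (fun v => D1 v ≠ D0 v ∧ X v = x) (fun v => Y1 v - Y0 v)
          = (∑ ω, if D1 ω ≠ D0 ω ∧ X ω = x then p ω * (Y1 ω - Y0 ω) else 0) /
              pprob p (fun ω => D1 ω ≠ D0 ω ∧ X ω = x) := by
        unfold eexp
        congr 1
        refine Finset.sum_congr rfl fun ω _ => ?_
        split_ifs <;> first | rfl | tauto
      -- independence applications
      have hig1 := indep_gen p X Z D0 D1 Y0 Y1 hindep x z
        (fun _ _ d0 d1 => d1 ≠ d0) (fun y0 y1 _ _ => y1 - y0)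
      have hig2 := indep_gen p X Z D0 D1 Y0 Y1 hindep x z
        (fun _ _ d0 d1 => d1 ≠ d0) (fun _ _ _ _ => (1 : ℝ))
      -- bridge sums
      have e1 : (∑ ω, if X ω = x ∧ D1 ω ≠ D0 ω ∧ Z ω = z then p ω * (Y1 ω - Y0 ω) else 0) *
            pprob p (fun ω => X ω = x)
          = (∑ ω, if X ω = x ∧ D1 ω ≠ D0 ω then p ω * (Y1 ω - Y0 ω) else 0) *
            pprob p (fun ω => X ω = x ∧ Z ω = z) := hig1
      have e2 : (∑ ω, if X ω = x ∧ D1 ω ≠ D0 ω ∧ Z ω = z then p ω else 0) *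
            pprob p (fun ω => X ω = x)
          = (∑ ω, if X ω = x ∧ D1 ω ≠ D0 ω then p ω else 0) *
            pprob p (fun ω => X ω = x ∧ Z ω = z) := by
        have b1 : (∑ ω, if X ω = x ∧ D1 ω ≠ D0 ω ∧ Z ω = z then p ω else 0)
            = ∑ ω, if X ω = x ∧ D1 ω ≠ D0 ω ∧ Z ω = z then p ω * 1 else 0 := by
          refine Finset.sum_congr rfl fun ω _ => ?_
          split_ifs <;> first | rw [mul_one] | rfl
        have b2 : (∑ ω, if X ω = x ∧ D1 ω ≠ D0 ω then p ω else 0)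
            = ∑ ω, if X ω = x ∧ D1 ω ≠ D0 ω then p ω * 1 else 0 := by
          refine Finset.sum_congr rfl fun ω _ => ?_
          split_ifs <;> first | rw [mul_one] | rfl
        rw [b1, b2]
        exact hig2
      -- reorder conditions to match S and N
      have hS : (∑ ω, if X ω = x ∧ D1 ω ≠ D0 ω then p ω * (Y1 ω - Y0 ω) else 0)
          = ∑ ω, if D1 ω ≠ D0 ω ∧ X ω = x then p ω * (Y1 ω - Y0 ω) else 0 := by
        refine Finset.sum_congr rfl fun ω _ => ?_
        split_ifs <;> first | rfl | tauto
      have hN : (∑ ω, if X ω = x ∧ D1 ω ≠ D0 ω then p ω else 0)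
          = pprob p (fun ω => D1 ω ≠ D0 ω ∧ X ω = x) := by
        unfold pprob
        refine Finset.sum_congr rfl fun ω _ => ?_
        split_ifs <;> first | rfl | tauto
      have hrx := hr x hxpos
      constructor
      · rw [hπeq, hτeq]
        have := e1
        rw [hS] at this
        have hTx : (∑ ω, if X ω = x ∧ D1 ω ≠ D0 ω ∧ Z ω = z then p ω * (Y1 ω - Y0 ω) else 0)
            = (∑ ω, if D1 ω ≠ D0 ω ∧ X ω = x then p ω * (Y1 ω - Y0 ω) else 0) *
              pprob p (fun ω => X ω = x ∧ Z ω = z) / pprob p (fun ω => X ω = x) :=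
          (eq_div_iff hx).mpr this
        rw [hTx, ← hrx]
        field_simp
      · rw [hπeq]
        have := e2
        rw [hN] at this
        have hDx : (∑ ω, if X ω = x ∧ D1 ω ≠ D0 ω ∧ Z ω = z then p ω else 0)
            = pprob p (fun ω => D1 ω ≠ D0 ω ∧ X ω = x) *
              pprob p (fun ω => X ω = x ∧ Z ω = z) / pprob p (fun ω => X ω = x) :=
          (eq_div_iff hx).mpr this
        rw [hDx, ← hrx]
        field_simp
  -- assemble
  have hnum : (∑ ω, if D1 ω ≠ D0 ω ∧ D ω = z then p ω * (Y1 ω - Y0 ω) else 0)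
      = pexp p (fun ω => r (X ω) * cprob p (fun v => D0 v < D1 v) (fun v => X v = X ω) *
          eexp p (fun v => D1 v ≠ D0 v ∧ X v = X ω) (fun v => Y1 v - Y0 v)) := by
    have s1 : (∑ ω, if D1 ω ≠ D0 ω ∧ D ω = z then p ω * (Y1 ω - Y0 ω) else 0)
        = ∑ ω, if D1 ω ≠ D0 ω ∧ Z ω = z then p ω * (Y1 ω - Y0 ω) else 0 := by
      refine Finset.sum_congr rfl fun ω _ => ?_
      by_cases hω : p ω = 0
      · split_ifs <;> simp [hω]
      · have := hsupp ω hω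
        split_ifs <;> first | rfl | tauto
    rw [s1, sum_group X (fun ω => p ω * (Y1 ω - Y0 ω)) (fun ω => D1 ω ≠ D0 ω ∧ Z ω = z),
      pexp_group p X (fun x => r x * cprob p (fun v => D0 v < D1 v) (fun v => X v = x) *
        eexp p (fun v => D1 v ≠ D0 v ∧ X v = x) (fun v => Y1 v - Y0 v))]
    exact Finset.sum_congr rfl fun x _ => (key x).1
  have hden : pprob p (fun ω => D1 ω ≠ D0 ω ∧ D ω = z)
      = pexp p (fun ω => r (X ω) * cprob p (fun v => D0 v < D1 v) (fun v => X v = X ω)) := by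
    unfold pprob
    have s1 : (∑ ω, if D1 ω ≠ D0 ω ∧ D ω = z then p ω else 0)
        = ∑ ω, if D1 ω ≠ D0 ω ∧ Z ω = z then p ω else 0 := by
      refine Finset.sum_congr rfl fun ω _ => ?_
      by_cases hω : p ω = 0
      · split_ifs <;> simp [hω]
      · have := hsupp ω hω
        split_ifs <;> first | rfl | tauto
    refine Eq.trans (Eq.trans ?_ s1) ?_
    · exact Finset.sum_congr rfl fun ω _ => by split_ifs <;> first | rfl | tauto
    · rw [sum_group X (fun ω => p ω) (fun ω => D1 ω ≠ D0 ω ∧ Z ω = z),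
        pexp_group p X (fun x => r x * cprob p (fun v => D0 v < D1 v) (fun v => X v = x))]
      exact Finset.sum_congr rfl fun x _ => (key x).2
  rw [eexp, hden]
  congr 1
  refine Eq.trans ?_ hnum
  exact Finset.sum_congr rfl fun ω _ => by split_ifs <;> first | rfl | tauto


/-- under Assumption IV and strong monotonicity,
`τ_LATT = E[e(X)·π(X)·τ(X)] / E[e(X)·π(X)]` and
`τ_LATU = E[(1-e(X))·π(X)·τ(X)] / E[(1-e(X))·π(X)]`, where `e(x) = Pr[Z=1|X=x]`,
`π(x) = Pr[D(1)>D(0)|X=x]`, and `τ(x)` is the conditional LATE. -/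
theorem stmt13 {Ω 𝓧 : Type*} [Fintype Ω] (p : Ω → ℝ) (hp : IsProb p)
    (X : Ω → 𝓧) (Z D0 D1 Y0 Y1 : Ω → ℝ)
    (hZ : ∀ ω, Z ω = 0 ∨ Z ω = 1)
    (hD0 : ∀ ω, D0 ω = 0 ∨ D0 ω = 1) (hD1 : ∀ ω, D1 ω = 0 ∨ D1 ω = 1)
    -- conditional independence: (Y0, Y1, D0, D1) ⫫ Z | X
    (hindep : ∀ (x : 𝓧) (y0 y1 d0 d1 z : ℝ),
      pprob p (fun ω => X ω = x ∧ Y0 ω = y0 ∧ Y1 ω = y1 ∧ D0 ω = d0 ∧ D1 ω = d1 ∧ Z ω = z) *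
          pprob p (fun ω => X ω = x)
        = pprob p (fun ω => X ω = x ∧ Y0 ω = y0 ∧ Y1 ω = y1 ∧ D0 ω = d0 ∧ D1 ω = d1) *
            pprob p (fun ω => X ω = x ∧ Z ω = z))
    -- relevance
    (hrel : ∀ x : 𝓧, 0 < pprob p (fun ω => X ω = x) →
      0 < cprob p (fun ω => Z ω = 1) (fun ω => X ω = x) ∧
      cprob p (fun ω => Z ω = 1) (fun ω => X ω = x) < 1 ∧
      0 < cprob p (fun ω => D1 ω ≠ D0 ω) (fun ω => X ω = x))
    -- strong monotonicity
    (hmono : ∀ ω, 0 < p ω → D0 ω ≤ D1 ω)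
    -- observed treatment and outcome (exclusion restriction built in)
    (D Y : Ω → ℝ)
    (hD : ∀ ω, D ω = if Z ω = 1 then D1 ω else D0 ω)
    (hY : ∀ ω, Y ω = if D ω = 1 then Y1 ω else Y0 ω)
    :
    eexp p (fun ω => D1 ω ≠ D0 ω ∧ D ω = 1) (fun ω => Y1 ω - Y0 ω) =
      pexp p (fun ω =>
          cprob p (fun v => Z v = 1) (fun v => X v = X ω) *
            cprob p (fun v => D0 v < D1 v) (fun v => X v = X ω) *
            eexp p (fun v => D1 v ≠ D0 v ∧ X v = X ω) (fun v => Y1 v - Y0 v)) /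
        pexp p (fun ω =>
          cprob p (fun v => Z v = 1) (fun v => X v = X ω) *
            cprob p (fun v => D0 v < D1 v) (fun v => X v = X ω)) ∧
    eexp p (fun ω => D1 ω ≠ D0 ω ∧ D ω = 0) (fun ω => Y1 ω - Y0 ω) =
      pexp p (fun ω =>
          (1 - cprob p (fun v => Z v = 1) (fun v => X v = X ω)) *
            cprob p (fun v => D0 v < D1 v) (fun v => X v = X ω) *
            eexp p (fun v => D1 v ≠ D0 v ∧ X v = X ω) (fun v => Y1 v - Y0 v)) /
        pexp p (fun ω =>
          (1 - cprob p (fun v => Z v = 1) (fun v => X v = X ω)) *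
            cprob p (fun v => D0 v < D1 v) (fun v => X v = X ω)) := by
  have hπ : ∀ x : 𝓧, 0 < pprob p (fun ω => X ω = x) →
      0 < cprob p (fun ω => D1 ω ≠ D0 ω) (fun ω => X ω = x) := fun x hx => (hrel x hx).2.2
  have he : ∀ x : 𝓧, 0 < pprob p (fun ω => X ω = x) →
      cprob p (fun v => Z v = 1) (fun v => X v = x) * pprob p (fun ω => X ω = x)
        = pprob p (fun ω => X ω = x ∧ Z ω = 1) := by
    intro x hx
    have h1 : pprob p (fun ω => Z ω = 1 ∧ X ω = x) = pprob p (fun ω => X ω = x ∧ Z ω = 1) :=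
      pprob_congr' p fun ω _ => and_comm
    calc cprob p (fun v => Z v = 1) (fun v => X v = x) * pprob p (fun ω => X ω = x)
        = pprob p (fun ω => Z ω = 1 ∧ X ω = x) / pprob p (fun ω => X ω = x) *
            pprob p (fun ω => X ω = x) := rfl
      _ = pprob p (fun ω => Z ω = 1 ∧ X ω = x) := div_mul_cancel₀ _ (ne_of_gt hx)
      _ = pprob p (fun ω => X ω = x ∧ Z ω = 1) := h1
  have hr1 : ∀ x : 𝓧, 0 < pprob p (fun ω => X ω = x) →
      cprob p (fun v => Z v = 1) (fun v => X v = x) * pprob p (fun ω => X ω = x)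
        = pprob p (fun ω => X ω = x ∧ Z ω = (1 : ℝ)) := he
  have hr0 : ∀ x : 𝓧, 0 < pprob p (fun ω => X ω = x) →
      (1 - cprob p (fun v => Z v = 1) (fun v => X v = x)) * pprob p (fun ω => X ω = x)
        = pprob p (fun ω => X ω = x ∧ Z ω = (0 : ℝ)) := by
    intro x hx
    have hsplit := Z_split p X Z hZ x
    have h1 := he x hx
    nlinarith [h1, hsplit]
  exact ⟨master p hp X Z D0 D1 Y0 Y1 hZ hD0 hD1 hindep hπ hmono D hD 1
      (fun x => cprob p (fun v => Z v = 1) (fun v => X v = x)) hr1,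
    master p hp X Z D0 D1 Y0 Y1 hZ hD0 hD1 hindep hπ hmono D hD 0
      (fun x => 1 - cprob p (fun v => Z v = 1) (fun v => X v = x)) hr0⟩
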